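/- Suppose C is a d²×d² matrix such that for every CPTP map E, the matrix J(E) ∘ C is the Jamiołkowski matrix of a CPTP map. Then the entries C_{ik,il} are independent of the index i, and the diagonal entries C_{ik,ik} all equal 1. -/

import Mathlib

open Matrix
open scoped Kronecker ComplexOrder

noncomputable section

/-- The Schur-product (Hadamard-product) superoperator `X ↦ X ∘ C`. -/
def schurMap {d : ℕ} (C : Matrix (Fin d) (Fin d) ℂ) :
    Matrix (Fin d) (Fin d) ℂ →ₗ[ℂ] Matrix (Fin d) (Fin d) ℂ where
  toFun X := X.hadamard C
  map_add' X Y := by ext i j; simp [Matrix.hadamard]; ring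
  map_smul' c X := by ext i j; simp [Matrix.hadamard]; ring

/-- The extension `E ⊗ I_n` of a superoperator, applied to a bipartite matrix. -/
def tensExt {d : ℕ} (E : Matrix (Fin d) (Fin d) ℂ →ₗ[ℂ] Matrix (Fin d) (Fin d) ℂ) (n : ℕ)
    (ρ : Matrix (Fin d × Fin n) (Fin d × Fin n) ℂ) :
    Matrix (Fin d × Fin n) (Fin d × Fin n) ℂ :=
  Matrix.of fun p q => ∑ i, ∑ j, (E (Matrix.single i j 1)) p.1 q.1 * ρ (i, p.2) (j, q.2)

/-- Complete positivity: every extension `E ⊗ I_n` preserves positive semidefiniteness. -/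
def IsCP {d : ℕ} (E : Matrix (Fin d) (Fin d) ℂ →ₗ[ℂ] Matrix (Fin d) (Fin d) ℂ) : Prop :=
  ∀ (n : ℕ) (ρ : Matrix (Fin d × Fin n) (Fin d × Fin n) ℂ),
    ρ.PosSemidef → (tensExt E n ρ).PosSemidef

/-- Trace preservation. -/
def IsTP {d : ℕ} (E : Matrix (Fin d) (Fin d) ℂ →ₗ[ℂ] Matrix (Fin d) (Fin d) ℂ) : Prop :=
  ∀ X, (E X).trace = X.trace

/-- Quantum channel: completely positive and trace-preserving. -/
def IsCPTP {d : ℕ} (E : Matrix (Fin d) (Fin d) ℂ →ₗ[ℂ] Matrix (Fin d) (Fin d) ℂ) : Prop :=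
  IsCP E ∧ IsTP E

/-- The Jamiołkowski matrix `J(E) = (E ⊗ I)(|Ψ⟩⟨Ψ|)`, with entries
`J(E)_{(i,k),(j,l)} = E(|k⟩⟨l|)_{i j} / d`. -/
def jam {d : ℕ} (E : Matrix (Fin d) (Fin d) ℂ →ₗ[ℂ] Matrix (Fin d) (Fin d) ℂ) :
    Matrix (Fin d × Fin d) (Fin d × Fin d) ℂ :=
  Matrix.of fun p q => (E (Matrix.single p.2 q.2 1)) p.1 q.1 / d

/-- Controlled unitary `U = Σ_i |i⟩⟨i| ⊗ U_i`. -/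
def ctrl {d n : ℕ} (Us : Fin d → Matrix (Fin n) (Fin n) ℂ) :
    Matrix (Fin d × Fin n) (Fin d × Fin n) ℂ :=
  Matrix.of fun p q => (if p.1 = q.1 then (1 : ℂ) else 0) * (Us p.1) p.2 q.2

/-! ### Auxiliary material: Kraus-operator channels -/

/-- The Kraus-form superoperator `X ↦ ∑ s, A s * X * (A s)ᴴ`. -/
def krausMap {d : ℕ} {ι : Type} [Fintype ι] (A : ι → Matrix (Fin d) (Fin d) ℂ) :
    Matrix (Fin d) (Fin d) ℂ →ₗ[ℂ] Matrix (Fin d) (Fin d) ℂ where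
  toFun X := ∑ s, A s * X * (A s)ᴴ
  map_add' X Y := by simp [Matrix.mul_add, Matrix.add_mul, Finset.sum_add_distrib]
  map_smul' c X := by simp [Matrix.mul_smul, Matrix.smul_mul, Finset.smul_sum]

lemma mul_std_mul {d : ℕ} (B D : Matrix (Fin d) (Fin d) ℂ) (i j a b : Fin d) :
    (B * Matrix.single i j (1:ℂ) * D) a b = B a i * D j b := by
  rw [Matrix.mul_assoc]
  simp [Matrix.mul_apply, Matrix.single, ite_and, Finset.mul_sum, mul_ite]

lemma sum3 {α β γ M : Type*} [Fintype α] [Fintype β] [Fintype γ] [AddCommMonoid M]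
    (f : α → β → γ → M) :
    ∑ a, ∑ b, ∑ c, f a b c = ∑ c, ∑ b, ∑ a, f a b c := by
  rw [show (∑ a, ∑ b, ∑ c, f a b c) = ∑ a, ∑ c, ∑ b, f a b c from
    Finset.sum_congr rfl fun _ _ => Finset.sum_comm, Finset.sum_comm]
  exact Finset.sum_congr rfl fun _ _ => Finset.sum_comm

lemma tensExt_kraus {d : ℕ} {ι : Type} [Fintype ι] (A : ι → Matrix (Fin d) (Fin d) ℂ)
    (n : ℕ) (ρ : Matrix (Fin d × Fin n) (Fin d × Fin n) ℂ) :
    tensExt (krausMap A) n ρ =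
      ∑ s, (A s ⊗ₖ (1 : Matrix (Fin n) (Fin n) ℂ)) * ρ *
        (A s ⊗ₖ (1 : Matrix (Fin n) (Fin n) ℂ))ᴴ := by
  ext p q
  show (∑ i, ∑ j, (∑ s, A s * Matrix.single i j (1:ℂ) * (A s)ᴴ) p.1 q.1 * ρ (i, p.2) (j, q.2)) = _
  rw [Matrix.sum_apply]
  simp only [Matrix.sum_apply, mul_std_mul, Matrix.conjTranspose_apply]
  simp only [Matrix.mul_apply, Matrix.kroneckerMap_apply, Matrix.one_apply,
    Matrix.conjTranspose_apply, Fintype.sum_prod_type]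
  simp only [apply_ite (star : ℂ → ℂ), star_zero, mul_ite, ite_mul, zero_mul, mul_zero,
    Finset.sum_ite_eq, Finset.sum_ite_eq', Finset.mem_univ, if_true, mul_one, one_mul]
  simp only [Finset.sum_mul, Finset.mul_sum]
  rw [sum3]
  exact Finset.sum_congr rfl fun s _ => Finset.sum_congr rfl fun j _ =>
    Finset.sum_congr rfl fun r _ => by ring

lemma krausMap_isCPTP {d : ℕ} {ι : Type} [Fintype ι] (A : ι → Matrix (Fin d) (Fin d) ℂ)
    (hA : ∑ s, (A s)ᴴ * A s = 1) : IsCPTP (krausMap A) := by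
  constructor
  · intro n ρ hρ
    rw [tensExt_kraus]
    exact Finset.sum_induction _ _ (fun a b ha hb => ha.add hb) Matrix.PosSemidef.zero
      fun s _ => hρ.mul_mul_conjTranspose_same _
  · intro X
    show (∑ s, A s * X * (A s)ᴴ).trace = X.trace
    rw [Matrix.trace_sum]
    calc ∑ s, (A s * X * (A s)ᴴ).trace = ∑ s, ((A s)ᴴ * A s * X).trace := by
          refine Finset.sum_congr rfl fun s _ => ?_
          rw [Matrix.trace_mul_cycle, Matrix.mul_assoc]
      _ = ((∑ s, (A s)ᴴ * A s) * X).trace := by rw [Finset.sum_mul, Matrix.trace_sum]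
      _ = X.trace := by rw [hA, Matrix.one_mul]

lemma jam_kraus {d : ℕ} {ι : Type} [Fintype ι] (A : ι → Matrix (Fin d) (Fin d) ℂ)
    (p q : Fin d × Fin d) :
    jam (krausMap A) p q = (∑ s, (A s) p.1 p.2 * star ((A s) q.1 q.2)) / d := by
  simp [jam, krausMap, Matrix.sum_apply, mul_std_mul, Matrix.conjTranspose_apply]

def F0 {d : ℕ} (i k : Fin d) : Matrix (Fin d) (Fin d) ℂ :=
  Matrix.of fun a b => (if a = i then (1:ℂ) else 0) * (if b = k then 1 else 0)

def F1 {d : ℕ} (k : Fin d) : Matrix (Fin d) (Fin d) ℂ :=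
  Matrix.of fun a b => if a = b ∧ a ≠ k then (1:ℂ) else 0

lemma F_hA {d : ℕ} (i k : Fin d) : (F0 i k)ᴴ * F0 i k + (F1 k)ᴴ * F1 k = 1 := by
  ext a b
  simp only [Matrix.add_apply, Matrix.mul_apply, Matrix.conjTranspose_apply, F0, F1,
    Matrix.of_apply, Matrix.one_apply]
  simp only [apply_ite (star : ℂ → ℂ), star_one, star_zero, star_mul', ite_and,
    mul_ite, ite_mul, zero_mul, mul_zero, mul_one, one_mul,
    Finset.sum_ite_eq, Finset.sum_ite_eq', Finset.mem_univ, if_true]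
  by_cases hab : a = b <;> by_cases hak : a = k <;> by_cases hbk : b = k <;>
    simp [hab, hak, hbk, eq_comm] <;> simp_all [eq_comm]

def cc : ℂ := (1 + Complex.I)/2

lemma hcc : star cc * cc = 1/2 := by
  rw [show (star cc) = (1 - Complex.I)/2 by
    simp [cc, Complex.star_def, map_div₀, Complex.conj_I]; rfl]
  rw [cc]; ring_nf; rw [Complex.I_sq]; ring

def G0 {d : ℕ} (i k l : Fin d) : Matrix (Fin d) (Fin d) ℂ :=
  Matrix.of fun a b => (if a = i then cc else 0) *
    ((if b = k then (1:ℂ) else 0) + (if b = l then 1 else 0))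

def G1 {d : ℕ} (i' k l : Fin d) : Matrix (Fin d) (Fin d) ℂ :=
  Matrix.of fun a b => (if a = i' then cc else 0) *
    ((if b = k then (1:ℂ) else 0) - (if b = l then 1 else 0))

def G2 {d : ℕ} (k l : Fin d) : Matrix (Fin d) (Fin d) ℂ :=
  Matrix.of fun a b => if a = b ∧ a ≠ k ∧ a ≠ l then (1:ℂ) else 0

lemma G_hA {d : ℕ} (i i' k l : Fin d) (hkl : k ≠ l) :
    (G0 i k l)ᴴ * G0 i k l + (G1 i' k l)ᴴ * G1 i' k l + (G2 k l)ᴴ * G2 k l = 1 := by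
  ext a b
  simp only [Matrix.add_apply, Matrix.mul_apply, Matrix.conjTranspose_apply, G0, G1, G2,
    Matrix.of_apply, Matrix.one_apply]
  simp only [star_mul', apply_ite (star : ℂ → ℂ), star_one, star_zero, star_add, star_sub,
    ite_and, mul_ite, ite_mul, zero_mul, mul_zero, mul_one, one_mul,
    Finset.sum_ite_eq, Finset.sum_ite_eq', Finset.mem_univ, if_true]
  have h2 := hcc
  by_cases hab : a = b <;> by_cases hak : a = k <;> by_cases hal : a = l <;>
    by_cases hbk : b = k <;> by_cases hbl : b = l <;>
    (try simp_all [eq_comm]) <;> linear_combination 2 * h2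

/-- if `J(E) ∘ C` is the Jamiołkowski matrix of a CPTP map (i.e. it is
PSD and satisfies `Tr₁ = 𝟙/d`) for every CPTP `E`, then the entries `C_{ik,il}` do
not depend on `i` and the diagonal entries of `C` equal `1`. -/
theorem stmt8 (d : ℕ) (C : Matrix (Fin d × Fin d) (Fin d × Fin d) ℂ)
    (hC : ∀ E : Matrix (Fin d) (Fin d) ℂ →ₗ[ℂ] Matrix (Fin d) (Fin d) ℂ, IsCPTP E →
      ((jam E).hadamard C).PosSemidef ∧
      ∀ k l, ∑ i, ((jam E).hadamard C) (i, k) (i, l) =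
        if k = l then 1 / (d : ℂ) else 0) :
    (∀ i i' k l, C (i, k) (i, l) = C (i', k) (i', l)) ∧
    (∀ i k, C (i, k) (i, k) = 1) := by
  have key : ∀ {ι : Type} [Fintype ι] (A : ι → Matrix (Fin d) (Fin d) ℂ),
      (∑ s, (A s)ᴴ * A s = 1) → ∀ k l : Fin d,
      ∑ i, (∑ s, (A s) i k * star ((A s) i l)) / (d : ℂ) * C (i, k) (i, l) =
        if k = l then 1 / (d : ℂ) else 0 := by
    intro ι _ A hA k l
    have h := (hC (krausMap A) (krausMap_isCPTP A hA)).2 k l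
    simpa [jam_kraus, Matrix.hadamard_apply] using h
  have hdiag : ∀ i k, C (i, k) (i, k) = 1 := by
    intro i k
    have hd : (d : ℂ) ≠ 0 := Nat.cast_ne_zero.mpr i.pos.ne'
    have hA : ∑ s, ((![F0 i k, F1 k]) s)ᴴ * (![F0 i k, F1 k]) s = 1 := by
      rw [Fin.sum_univ_two]
      simpa using F_hA i k
    have h := key (![F0 i k, F1 k]) hA k k
    rw [if_pos rfl] at h
    have hsum : ∀ j : Fin d,
        (∑ s, ((![F0 i k, F1 k]) s) j k * star (((![F0 i k, F1 k]) s) j k)) =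
          (if j = i then (1:ℂ) else 0) := by
      intro j
      rw [Fin.sum_univ_two]
      simp only [Matrix.cons_val_zero, Matrix.cons_val_one, Matrix.head_cons, F0, F1,
        Matrix.of_apply]
      by_cases hji : j = i <;> simp [hji]
    rw [Finset.sum_congr rfl fun j _ => by rw [hsum j]] at h
    simp only [ite_div, ite_mul, zero_div, zero_mul, Finset.sum_ite_eq',
      Finset.mem_univ, if_true] at h
    field_simp at h
    exact h
  refine ⟨?_, hdiag⟩
  intro i i' k l
  by_cases hkl : k = l
  · subst hkl; rw [hdiag i k, hdiag i' k]
  by_cases hii : i = i'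
  · rw [hii]
  have hd : (d : ℂ) ≠ 0 := Nat.cast_ne_zero.mpr i.pos.ne'
  have hA : ∑ s, ((![G0 i k l, G1 i' k l, G2 k l]) s)ᴴ * (![G0 i k l, G1 i' k l, G2 k l]) s
      = 1 := by
    rw [Fin.sum_univ_three]
    simpa using G_hA i i' k l hkl
  have h := key (![G0 i k l, G1 i' k l, G2 k l]) hA k l
  rw [if_neg hkl] at h
  have hsum : ∀ j : Fin d,
      (∑ s, ((![G0 i k l, G1 i' k l, G2 k l]) s) j k *
        star (((![G0 i k l, G1 i' k l, G2 k l]) s) j l)) =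
      (if j = i then (1/2 : ℂ) else 0) - (if j = i' then (1/2 : ℂ) else 0) := by
    intro j
    clear hC key hdiag hA h hd
    rw [Fin.sum_univ_three]
    simp only [Matrix.cons_val_zero, Matrix.cons_val_one, Matrix.head_cons,
      Matrix.cons_val_two, Matrix.tail_cons, G0, G1, G2, Matrix.of_apply]
    have h2 : (starRingEnd ℂ) cc * cc = 1/2 := hcc
    by_cases hji : j = i <;> by_cases hji' : j = i' <;>
      by_cases hjk : j = k <;> by_cases hjl : j = l <;>
      first
      | exact absurd (hji.symm.trans hji') hii
      | exact absurd (hjk.symm.trans hjl) hkl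
      | (simp [hji, hji', hjk, hjl, hkl, hii, eq_comm, Complex.star_def] <;> split_ifs <;>
          first
            | tauto
            | linear_combination h2
            | linear_combination 2 * h2
            | linear_combination -h2
            | (exfalso; subst_vars; tauto))
  rw [Finset.sum_congr rfl fun j _ => by rw [hsum j]] at h
  simp only [sub_div, sub_mul, Finset.sum_sub_distrib, ite_div, ite_mul, zero_div, zero_mul,
    Finset.sum_ite_eq', Finset.mem_univ, if_true] at h
  have h' := sub_eq_zero.mp h
  field_simp at h'
  exact h'

end
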